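/- Let u, u* ∈ ℝⁿ and v, v* ∈ ℝᵐ (Euclidean spaces) satisfy ⟨u*,u⟩ = ⟨v*,v⟩ and ‖u‖₂ = ‖v*‖₂ = 1. Then the m×n matrix B̄ := v* u*ᵀ + v uᵀ − ⟨u*,u⟩ v* uᵀ satisfies B̄ u = v, B̄ᵀ v* = u*, and ‖B̄‖_F² = ‖u*‖₂² + ‖v‖₂² − ⟨u*,u⟩², where ‖·‖_F denotes the Frobenius norm. -/
import Mathlib


open Matrix

noncomputable section

/-- The Euclidean norm on `Fin k → ℝ`. -/
def euclN {k : ℕ} (x : Fin k → ℝ) : ℝ := Real.sqrt (x ⬝ᵥ x)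

/-- The Frobenius norm of a real matrix. -/
def frobNorm {m n : ℕ} (B : Matrix (Fin m) (Fin n) ℝ) : ℝ :=
  Real.sqrt (∑ i, ∑ j, (B i j) ^ 2)

/-- The matrix `B̄ := v* u*ᵀ + v uᵀ − ⟨u*,u⟩ v* uᵀ`. -/
def Bbar {m n : ℕ} (u us : Fin n → ℝ) (v vs : Fin m → ℝ) : Matrix (Fin m) (Fin n) ℝ :=
  Matrix.vecMulVec vs us + Matrix.vecMulVec v u - (us ⬝ᵥ u) • Matrix.vecMulVec vs u

lemma dot_self_nonneg' {k : ℕ} (x : Fin k → ℝ) : 0 ≤ x ⬝ᵥ x :=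
  Finset.sum_nonneg fun _ _ => mul_self_nonneg _

lemma euclN_sq {k : ℕ} (x : Fin k → ℝ) : euclN x ^ 2 = x ⬝ᵥ x := by
  rw [euclN, Real.sq_sqrt (dot_self_nonneg' x)]

lemma Bbar_apply {m n : ℕ} (u us : Fin n → ℝ) (v vs : Fin m → ℝ) (i : Fin m) (j : Fin n) :
    Bbar u us v vs i j = vs i * us j + v i * u j - (us ⬝ᵥ u) * (vs i * u j) := by
  simp [Bbar, Matrix.vecMulVec_apply]

/-- `B̄ u = v`, `B̄ᵀ v* = u*` and
`‖B̄‖_F² = ‖u*‖₂² + ‖v‖₂² − ⟨u*,u⟩²`. -/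
theorem statement12 {m n : ℕ} (u us : Fin n → ℝ) (v vs : Fin m → ℝ)
    (hc : us ⬝ᵥ u = vs ⬝ᵥ v) (hu : euclN u = 1) (hvs : euclN vs = 1) :
    (Bbar u us v vs).mulVec u = v ∧
    (Bbar u us v vs).transpose.mulVec vs = us ∧
    frobNorm (Bbar u us v vs) ^ 2 = euclN us ^ 2 + euclN v ^ 2 - (us ⬝ᵥ u) ^ 2 := by
  have hu1 : u ⬝ᵥ u = 1 := by have := euclN_sq u; rw [hu] at this; linarith
  have hvs1 : vs ⬝ᵥ vs = 1 := by have := euclN_sq vs; rw [hvs] at this; linarith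
  set c := us ⬝ᵥ u with hcdef
  refine ⟨?_, ?_, ?_⟩
  · funext i
    show ∑ j, Bbar u us v vs i j * u j = v i
    have : ∑ j, Bbar u us v vs i j * u j
        = vs i * (us ⬝ᵥ u) + v i * (u ⬝ᵥ u) - (c * vs i) * (u ⬝ᵥ u) := by
      simp only [dotProduct, Finset.mul_sum, ← Finset.sum_add_distrib, ← Finset.sum_sub_distrib]
      exact Finset.sum_congr rfl fun j _ => by rw [Bbar_apply]; ring
    rw [this, ← hcdef, hu1]; ring
  · funext j
    show ∑ i, Bbar u us v vs i j * vs i = us j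
    have : ∑ i, Bbar u us v vs i j * vs i
        = us j * (vs ⬝ᵥ vs) + u j * (vs ⬝ᵥ v) - (c * u j) * (vs ⬝ᵥ vs) := by
      simp only [dotProduct, Finset.mul_sum, ← Finset.sum_add_distrib, ← Finset.sum_sub_distrib]
      exact Finset.sum_congr rfl fun i _ => by rw [Bbar_apply]; ring
    rw [this, ← hc, hvs1]; ring
  · have inner : ∀ i, ∑ j, (Bbar u us v vs i j) ^ 2
        = (vs i * vs i) * (us ⬝ᵥ us) + (v i * v i) * (u ⬝ᵥ u)
          + c ^ 2 * (vs i * vs i) * (u ⬝ᵥ u) + 2 * (vs i * v i) * (us ⬝ᵥ u)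
          - 2 * c * (vs i * vs i) * (us ⬝ᵥ u) - 2 * c * (vs i * v i) * (u ⬝ᵥ u) := by
      intro i
      simp only [dotProduct, Finset.mul_sum, ← Finset.sum_add_distrib, ← Finset.sum_sub_distrib]
      exact Finset.sum_congr rfl fun j _ => by rw [Bbar_apply]; ring
    have outer : ∑ i, ∑ j, (Bbar u us v vs i j) ^ 2
        = (vs ⬝ᵥ vs) * (us ⬝ᵥ us) + (v ⬝ᵥ v) * (u ⬝ᵥ u)
          + c ^ 2 * (vs ⬝ᵥ vs) * (u ⬝ᵥ u) + 2 * (vs ⬝ᵥ v) * (us ⬝ᵥ u)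
          - 2 * c * (vs ⬝ᵥ vs) * (us ⬝ᵥ u) - 2 * c * (vs ⬝ᵥ v) * (u ⬝ᵥ u) := by
      rw [Finset.sum_congr rfl fun i _ => inner i]
      simp only [Finset.sum_add_distrib, Finset.sum_sub_distrib, ← Finset.sum_mul,
        ← Finset.mul_sum, dotProduct]
    have hfrob : frobNorm (Bbar u us v vs) ^ 2 = ∑ i, ∑ j, (Bbar u us v vs i j) ^ 2 := by
      rw [frobNorm, Real.sq_sqrt]
      exact Finset.sum_nonneg fun i _ => Finset.sum_nonneg fun j _ => sq_nonneg _
    rw [hfrob, outer, euclN_sq, euclN_sq, ← hc, ← hcdef, hu1, hvs1]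
    ring


end
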